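/- Let α > 0 and Γ₁, Γ₂ ∈ ℝ with Γ₁ + Γ₂ ≠ 0, let a₁, a₂ ∈ ℂ with a₁ ≠ a₂, set C = (Γ₁ a₁ + Γ₂ a₂)/(Γ₁ + Γ₂), D = |a₁ − a₂|, and ω = −α(Γ₁ + Γ₂)/D^{3/2}. Then the functions z_j(t) = (a_j − C) e^{iωt} + C for j = 1, 2 satisfy z_j(0) = a_j, z₁(t) ≠ z₂(t) for all t, and solve the system dz₁/dt = −i α Γ₂ (z₁ − z₂)/|z₁ − z₂|^{3/2}, dz₂/dt = −i α Γ₁ (z₂ − z₁)/|z₁ − z₂|^{3/2} for all t ∈ ℝ. -/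

import Mathlib

noncomputable section

/-- When Γ₁ + Γ₂ ≠ 0, the explicit rotating configuration
z_j(t) = (a_j − C) e^{iωt} + C, with C the center of vorticity, D = |a₁ − a₂|
and ω = −α(Γ₁ + Γ₂)/D^{3/2}, solves the point-vortex system with
z_j(0) = a_j, and the two vortices never collide. -/
theorem point_vortex_rotating_solution
    (α Γ₁ Γ₂ : ℝ) (hα : 0 < α) (hsum : Γ₁ + Γ₂ ≠ 0)
    (a₁ a₂ : ℂ) (ha : a₁ ≠ a₂)
    (C : ℂ) (hC : C = ((Γ₁ : ℂ) * a₁ + (Γ₂ : ℂ) * a₂) / ((Γ₁ : ℂ) + (Γ₂ : ℂ)))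
    (D : ℝ) (hD : D = ‖a₁ - a₂‖)
    (ω : ℝ) (hω : ω = -(α * (Γ₁ + Γ₂)) / D ^ ((3 : ℝ) / 2))
    (z₁ z₂ : ℝ → ℂ)
    (hz₁ : ∀ t : ℝ, z₁ t = (a₁ - C) * Complex.exp (Complex.I * (ω : ℂ) * (t : ℂ)) + C)
    (hz₂ : ∀ t : ℝ, z₂ t = (a₂ - C) * Complex.exp (Complex.I * (ω : ℂ) * (t : ℂ)) + C) :
    z₁ 0 = a₁ ∧ z₂ 0 = a₂ ∧ (∀ t : ℝ, z₁ t ≠ z₂ t) ∧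
    (∀ t : ℝ, HasDerivAt z₁
      (-Complex.I * (α : ℂ) * (Γ₂ : ℂ) * (z₁ t - z₂ t) /
        ((‖z₁ t - z₂ t‖ ^ ((3 : ℝ) / 2) : ℝ) : ℂ)) t) ∧
    (∀ t : ℝ, HasDerivAt z₂
      (-Complex.I * (α : ℂ) * (Γ₁ : ℂ) * (z₂ t - z₁ t) /
        ((‖z₁ t - z₂ t‖ ^ ((3 : ℝ) / 2) : ℝ) : ℂ)) t) := by
  have hsumC : (Γ₁ : ℂ) + (Γ₂ : ℂ) ≠ 0 := by exact_mod_cast hsum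
  have hdiff : ∀ t : ℝ, z₁ t - z₂ t = (a₁ - a₂) * Complex.exp (Complex.I * (ω : ℂ) * (t : ℂ)) := by
    intro t; rw [hz₁ t, hz₂ t]; ring
  have hane : a₁ - a₂ ≠ 0 := sub_ne_zero.mpr ha
  have hexpne : ∀ t : ℝ, Complex.exp (Complex.I * (ω : ℂ) * (t : ℂ)) ≠ 0 :=
    fun t => Complex.exp_ne_zero _
  have habs : ∀ t : ℝ, ‖z₁ t - z₂ t‖ = D := by
    intro t
    rw [hdiff t, norm_mul, Complex.norm_exp]
    have : (Complex.I * (ω : ℂ) * (t : ℂ)).re = 0 := by simp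
    rw [this, Real.exp_zero, mul_one, hD]
  have hDpos : 0 < D := by rw [hD]; exact norm_pos_iff.mpr hane
  have hDr : (0:ℝ) < D ^ ((3:ℝ)/2) := Real.rpow_pos_of_pos hDpos _
  have hDrne : ((D ^ ((3:ℝ)/2) : ℝ) : ℂ) ≠ 0 := by exact_mod_cast hDr.ne'
  -- center relations
  have ha1C : a₁ - C = (Γ₂ : ℂ) * (a₁ - a₂) / ((Γ₁ : ℂ) + (Γ₂ : ℂ)) := by
    rw [hC]; field_simp; ring
  have ha2C : a₂ - C = (Γ₁ : ℂ) * (a₂ - a₁) / ((Γ₁ : ℂ) + (Γ₂ : ℂ)) := by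
    rw [hC]; field_simp; ring
  have hωC : (ω : ℂ) = -((α : ℂ) * ((Γ₁ : ℂ) + (Γ₂ : ℂ))) / ((D ^ ((3:ℝ)/2) : ℝ) : ℂ) := by
    rw [hω]; push_cast; ring
  have hderiv : ∀ (t : ℝ) (b : ℂ),
      HasDerivAt (fun s : ℝ => b * Complex.exp (Complex.I * (ω : ℂ) * (s : ℂ)) + C)
        (b * (Complex.exp (Complex.I * (ω : ℂ) * (t : ℂ)) * (Complex.I * (ω : ℂ)))) t := by
    intro t b
    have h0 : HasDerivAt (fun s : ℝ => (s : ℂ)) 1 t := by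
      exact Complex.ofRealCLM.hasDerivAt (x := t)
    have h1 : HasDerivAt (fun s : ℝ => Complex.I * (ω : ℂ) * (s : ℂ)) (Complex.I * (ω : ℂ)) t := by
      simpa using h0.const_mul (Complex.I * (ω : ℂ))
    exact ((h1.cexp).const_mul b).add_const C
  refine ⟨?_, ?_, ?_, ?_, ?_⟩
  · rw [hz₁ 0]; simp
  · rw [hz₂ 0]; simp
  · intro t h
    have := hdiff t
    rw [sub_eq_zero.mpr h, eq_comm] at this
    exact (mul_ne_zero hane (hexpne t)) this
  · intro t
    have h := hderiv t (a₁ - C)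
    have heq : (a₁ - C) * (Complex.exp (Complex.I * (ω : ℂ) * (t : ℂ)) * (Complex.I * (ω : ℂ)))
        = -Complex.I * (α : ℂ) * (Γ₂ : ℂ) * (z₁ t - z₂ t) /
          ((‖z₁ t - z₂ t‖ ^ ((3 : ℝ) / 2) : ℝ) : ℂ) := by
      rw [habs t, hdiff t, ha1C, hωC]
      field_simp
    rw [heq] at h
    exact h.congr_of_eventuallyEq (Filter.Eventually.of_forall hz₁)
  · intro t
    have h := hderiv t (a₂ - C)
    have hdiff2 : z₂ t - z₁ t = (a₂ - a₁) * Complex.exp (Complex.I * (ω : ℂ) * (t : ℂ)) := by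
      rw [hz₁ t, hz₂ t]; ring
    have heq : (a₂ - C) * (Complex.exp (Complex.I * (ω : ℂ) * (t : ℂ)) * (Complex.I * (ω : ℂ)))
        = -Complex.I * (α : ℂ) * (Γ₁ : ℂ) * (z₂ t - z₁ t) /
          ((‖z₁ t - z₂ t‖ ^ ((3 : ℝ) / 2) : ℝ) : ℂ) := by
      rw [habs t, hdiff2, ha2C, hωC]
      field_simp
    rw [heq] at h
    exact h.congr_of_eventuallyEq (Filter.Eventually.of_forall hz₂)
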